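/- Fix 0 < m ≤ L and let s, ℓ ∈ (0, L]. The two complex numbers ((1+β(s))/2)(1 − ℓ/L) ± sqrt( ((1+β(s))²/4)(1 − ℓ/L)² − β(s)(1 − ℓ/L) ) have nonzero imaginary part if and only if s < ℓ < L. If they have zero imaginary part, then ρ(s, ℓ) = ((1+β(s))/2)(1 − ℓ/L) + sqrt( ((1+β(s))²/4)(1 − ℓ/L)² − β(s)(1 − ℓ/L) ); if they have nonzero imaginary part, then ρ(s, ℓ) = sqrt( β(s)(1 − ℓ/L) ). -/

import Mathlib

/-- `β(s) = (√L − √s)/(√L + √s)`. -/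
noncomputable def momBeta (L s : ℝ) : ℝ :=
  (Real.sqrt L - Real.sqrt s) / (Real.sqrt L + Real.sqrt s)

/-- The complex square root of a real number: `√x` if `x ≥ 0`, `i√(−x)` otherwise. -/
noncomputable def csqrt (x : ℝ) : ℂ :=
  if 0 ≤ x then ((Real.sqrt x : ℝ) : ℂ) else Complex.I * ((Real.sqrt (-x) : ℝ) : ℂ)

/-- The discriminant `((1+β(s))²/4)(1 − ℓ/L)² − β(s)(1 − ℓ/L)`. -/
noncomputable def discr (L s ℓ : ℝ) : ℝ :=
  ((1 + momBeta L s) / 2) ^ 2 * (1 - ℓ / L) ^ 2 - momBeta L s * (1 - ℓ / L)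

/-- The eigenvalue `((1+β(s))/2)(1 − ℓ/L) + sqrt(discriminant)` of `G(s, ℓ)`. -/
noncomputable def eigP (L s ℓ : ℝ) : ℂ :=
  (((1 + momBeta L s) / 2 * (1 - ℓ / L) : ℝ) : ℂ) + csqrt (discr L s ℓ)

/-- The eigenvalue `((1+β(s))/2)(1 − ℓ/L) − sqrt(discriminant)` of `G(s, ℓ)`. -/
noncomputable def eigM (L s ℓ : ℝ) : ℂ :=
  (((1 + momBeta L s) / 2 * (1 - ℓ / L) : ℝ) : ℂ) - csqrt (discr L s ℓ)

/-- `ρ(s, ℓ)`: the maximum modulus of the two eigenvalues of `G(s, ℓ)`. -/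
noncomputable def specRho (L s ℓ : ℝ) : ℝ :=
  max ‖eigP L s ℓ‖ ‖eigM L s ℓ‖

lemma aux_discr (a b ℓ : ℝ) (ha : 0 < a) (hb : 0 < b) :
    ((1 + (a - b) / (a + b)) / 2) ^ 2 * (1 - ℓ / a ^ 2) ^ 2
      - (a - b) / (a + b) * (1 - ℓ / a ^ 2)
    = (a ^ 2 - ℓ) * (b ^ 2 - ℓ) / (a ^ 2 * (a + b) ^ 2) := by
  have h1 : a + b ≠ 0 := by positivity
  have h2 : a ≠ 0 := ha.ne'
  field_simp
  ring

/-- (Lemma `la:lem:rho-expression`.) For `s, ℓ ∈ (0, L]`, the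
two eigenvalues have nonzero imaginary part iff `s < ℓ < L`; in the real case
`ρ(s, ℓ)` is given by the `+`-root formula, and in the complex case
`ρ(s, ℓ) = √(β(s)(1 − ℓ/L))`. -/
theorem stmt10 {L m s ℓ : ℝ} (hm : 0 < m) (hmL : m ≤ L)
    (hs0 : 0 < s) (hsL : s ≤ L) (hl0 : 0 < ℓ) (hlL : ℓ ≤ L) :
    (((eigP L s ℓ).im ≠ 0 ∧ (eigM L s ℓ).im ≠ 0) ↔ (s < ℓ ∧ ℓ < L)) ∧
    ((eigP L s ℓ).im = 0 ∧ (eigM L s ℓ).im = 0 →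
      specRho L s ℓ =
        (1 + momBeta L s) / 2 * (1 - ℓ / L) + Real.sqrt (discr L s ℓ)) ∧
    ((eigP L s ℓ).im ≠ 0 ∧ (eigM L s ℓ).im ≠ 0 →
      specRho L s ℓ = Real.sqrt (momBeta L s * (1 - ℓ / L))) := by
  have hL : 0 < L := lt_of_lt_of_le hm hmL
  have hp : 0 < Real.sqrt L := Real.sqrt_pos.2 hL
  have hq : 0 < Real.sqrt s := Real.sqrt_pos.2 hs0
  have hpq : Real.sqrt s ≤ Real.sqrt L := Real.sqrt_le_sqrt hsL
  have hp2 : Real.sqrt L ^ 2 = L := Real.sq_sqrt hL.le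
  have hq2 : Real.sqrt s ^ 2 = s := Real.sq_sqrt hs0.le
  have hkey : discr L s ℓ
      = (L - ℓ) * (s - ℓ) / (L * (Real.sqrt L + Real.sqrt s) ^ 2) := by
    have := aux_discr (Real.sqrt L) (Real.sqrt s) ℓ hp hq
    rw [hp2, hq2] at this
    simpa [discr, momBeta] using this
  have hden : 0 < L * (Real.sqrt L + Real.sqrt s) ^ 2 := by positivity
  have hDsign : discr L s ℓ < 0 ↔ (s < ℓ ∧ ℓ < L) := by
    rw [hkey, div_neg_iff]
    constructor
    · rintro (⟨h1, h2⟩ | ⟨h1, h2⟩)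
      · exact absurd h2 (not_lt.2 hden.le)
      · constructor <;> nlinarith
    · rintro ⟨h1, h2⟩
      exact Or.inr ⟨by nlinarith, hden⟩
  have hβ0 : 0 ≤ momBeta L s :=
    div_nonneg (sub_nonneg.2 hpq) (by positivity)
  have ht0 : 0 ≤ 1 - ℓ / L := by
    have : ℓ / L ≤ 1 := (div_le_one hL).2 hlL
    linarith
  set a : ℝ := (1 + momBeta L s) / 2 * (1 - ℓ / L) with ha_def
  have ha : 0 ≤ a := by
    apply mul_nonneg _ ht0
    linarith
  have hda : discr L s ℓ = a ^ 2 - momBeta L s * (1 - ℓ / L) := by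
    rw [ha_def]; unfold discr; ring
  rcases le_or_gt 0 (discr L s ℓ) with hD | hD
  · -- real case
    have heP : eigP L s ℓ = ((a + Real.sqrt (discr L s ℓ) : ℝ) : ℂ) := by
      simp [eigP, csqrt, hD, ha_def]
    have heM : eigM L s ℓ = ((a - Real.sqrt (discr L s ℓ) : ℝ) : ℂ) := by
      simp [eigM, csqrt, hD, ha_def]
    have himP : (eigP L s ℓ).im = 0 := by rw [heP]; simp
    have himM : (eigM L s ℓ).im = 0 := by rw [heM]; simp
    have hsqle : Real.sqrt (discr L s ℓ) ≤ a := by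
      have h1 : discr L s ℓ ≤ a ^ 2 := by
        rw [hda]
        nlinarith [mul_nonneg hβ0 ht0]
      calc Real.sqrt (discr L s ℓ) ≤ Real.sqrt (a ^ 2) := Real.sqrt_le_sqrt h1
        _ = a := by rw [Real.sqrt_sq ha]
    have hsq0 : 0 ≤ Real.sqrt (discr L s ℓ) := Real.sqrt_nonneg _
    refine ⟨⟨fun h => absurd himP h.1, fun h => absurd (hDsign.2 h) (not_lt.2 hD)⟩,
      fun _ => ?_, fun h => absurd himP h.1⟩
    rw [specRho, heP, heM, Complex.norm_real, Complex.norm_real, Real.norm_eq_abs, Real.norm_eq_abs,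
      abs_of_nonneg (by linarith), abs_of_nonneg (by linarith)]
    rw [max_eq_left (by linarith)]
  · -- complex case
    have hD' : ¬ (0 ≤ discr L s ℓ) := not_le.2 hD
    have hsqpos : 0 < Real.sqrt (-discr L s ℓ) :=
      Real.sqrt_pos.2 (by linarith)
    have hreP : (eigP L s ℓ).re = a := by
      rw [eigP, csqrt, if_neg hD']; simp [ha_def]
    have himP : (eigP L s ℓ).im = Real.sqrt (-discr L s ℓ) := by
      rw [eigP, csqrt, if_neg hD']; simp
    have hreM : (eigM L s ℓ).re = a := by
      rw [eigM, csqrt, if_neg hD']; simp [ha_def]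
    have himM : (eigM L s ℓ).im = -Real.sqrt (-discr L s ℓ) := by
      rw [eigM, csqrt, if_neg hD']; simp
    have hbt : a ^ 2 + Real.sqrt (-discr L s ℓ) ^ 2
        = momBeta L s * (1 - ℓ / L) := by
      rw [Real.sq_sqrt (by linarith)]
      rw [hda]; ring
    have habs : ∀ z : ℂ, ‖z‖ = Real.sqrt (z.re ^ 2 + z.im ^ 2) := by
      intro z
      rw [Complex.norm_def, Complex.normSq_apply]
      ring_nf
    refine ⟨⟨fun _ => hDsign.1 hD, fun _ => ?_⟩, fun h => ?_, fun _ => ?_⟩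
    · rw [himP, himM]
      exact ⟨hsqpos.ne', by simpa using hsqpos.ne'⟩
    · exfalso
      rw [himP] at h
      exact hsqpos.ne' h.1
    · rw [specRho, habs, habs, hreP, himP, hreM, himM, neg_sq, hbt, max_self]
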